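/- If r ≥ 2, then the r-dimensional hypercube Q_r admits an isometric path edge cover consisting of 2^{r-1} geodesics; consequently ip_e(Q_r) ≤ 2^{r-1}. -/

import Mathlib

open SimpleGraph

/-- A walk is a geodesic if its length equals the distance between its endpoints. -/
def IsGeodesic {V : Type*} (G : SimpleGraph V) {u v : V} (p : G.Walk u v) : Prop :=
  p.length = G.dist u v

/-- The `r`-dimensional hypercube: vertices are functions `Fin r → Bool`, two vertices
are adjacent iff they differ in exactly one coordinate. -/
def hypercube (r : ℕ) : SimpleGraph (Fin r → Bool) where
  Adj x y := ∃! i, x i ≠ y i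
  symm := by
    constructor
    rintro x y ⟨i, hi, hu⟩
    exact ⟨i, hi.symm, fun j hj => hu j hj.symm⟩
  loopless := by
    constructor
    rintro x ⟨i, hi, -⟩
    exact hi rfl

/-- An indexed family of `k` geodesics of `G` is an isometric path edge cover if every
edge of `G` lies on at least one of them. -/
def IsIsometricPathEdgeCover {V : Type*} (G : SimpleGraph V) (k : ℕ)
    (u v : Fin k → V) (p : ∀ i, G.Walk (u i) (v i)) : Prop :=
  (∀ i, IsGeodesic G (p i)) ∧ ∀ e ∈ G.edgeSet, ∃ i, e ∈ (p i).edges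

namespace HCaux

variable {r : ℕ}

/-- flip the first `n` coordinates of `x`. -/
def step (x : Fin r → Bool) (n : ℕ) : Fin r → Bool := fun i => if i.val < n then !x i else x i

lemma step_adj (x : Fin r → Bool) {n : ℕ} (hn : n < r) :
    (hypercube r).Adj (step x n) (step x (n + 1)) := by
  refine ⟨⟨n, hn⟩, ?_, ?_⟩
  · simp [step]
  · intro j hj
    by_contra hne
    apply hj
    have hjn : j.val ≠ n := fun h => hne (Fin.ext h)
    simp only [step]
    rcases lt_or_gt_of_ne hjn with h | h
    · simp [h, Nat.lt_succ_of_lt h]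
    · simp [Nat.not_lt.2 h.le, Nat.not_lt.2 h]

def seg (x : Fin r → Bool) (n : ℕ) : (hypercube r).Walk (step x n) (step x r) :=
  if h : n < r then
    Walk.cons (step_adj x h) (seg x (n + 1))
  else
    Walk.nil.copy (by
      funext i
      simp only [step]
      have h1 : i.val < r := i.isLt
      have h2 : i.val < n := lt_of_lt_of_le h1 (Nat.not_lt.1 h)
      simp [h1, h2]) rfl
termination_by r - n

lemma seg_length (x : Fin r → Bool) (n : ℕ) : (seg x n).length = r - n := by
  unfold seg
  split
  · next h => rw [Walk.length_cons, seg_length x (n + 1)]; omega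
  · next h => rw [Walk.length_copy, Walk.length_nil]; omega
termination_by r - n

lemma seg_edges (x : Fin r → Bool) (n m : ℕ) (hnm : n ≤ m) (hm : m < r) :
    s(step x m, step x (m + 1)) ∈ (seg x n).edges := by
  unfold seg
  split
  · next h =>
    rw [Walk.edges_cons]
    rcases eq_or_lt_of_le hnm with rfl | h'
    · exact List.mem_cons_self
    · exact List.mem_cons_of_mem _ (seg_edges x (n + 1) m h' hm)
  · next h => omega
termination_by r - n

def ham (a b : Fin r → Bool) : ℕ := (Finset.univ.filter fun i => a i ≠ b i).card

lemma ham_le_length {a b : Fin r → Bool} (p : (hypercube r).Walk a b) : ham a b ≤ p.length := by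
  induction p with
  | nil => simp [ham]
  | @cons u v w h p ih =>
    obtain ⟨j, hj, hu⟩ := h
    have hsub : (Finset.univ.filter fun i => u i ≠ w i) ⊆
        insert j (Finset.univ.filter fun i => v i ≠ w i) := by
      intro i hi
      simp only [Finset.mem_filter, Finset.mem_univ, true_and] at hi
      by_cases hv : v i = w i
      · exact Finset.mem_insert.2 (Or.inl (hu i (fun h' => hi (h'.trans hv))))
      · exact Finset.mem_insert_of_mem (by simp [hv])
    calc ham u w ≤ (insert j (Finset.univ.filter fun i => v i ≠ w i)).card :=
          Finset.card_le_card hsub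
      _ ≤ (Finset.univ.filter fun i => v i ≠ w i).card + 1 := Finset.card_insert_le _ _
      _ ≤ p.length + 1 := by have := ih; unfold ham at this; omega
      _ = _ := (Walk.length_cons _ _).symm

lemma seg_geodesic (x : Fin r → Bool) : IsGeodesic (hypercube r) (seg x 0) := by
  have hlen : (seg x 0).length = r := by rw [seg_length]; omega
  have hham : ham (step x 0) (step x r) = r := by
    unfold ham step
    have : (Finset.univ.filter fun i : Fin r =>
        (if i.val < 0 then !x i else x i) ≠ (if i.val < r then !x i else x i)) = Finset.univ := by
      ext i
      simp [i.isLt]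
    rw [this, Finset.card_univ, Fintype.card_fin]
  have hreach : (hypercube r).Reachable (step x 0) (step x r) := ⟨seg x 0⟩
  have h1 : (hypercube r).dist (step x 0) (step x r) ≤ r := by
    have := SimpleGraph.dist_le (seg x 0); rwa [hlen] at this
  obtain ⟨q, hq⟩ := hreach.exists_walk_length_eq_dist
  have h2 : r ≤ (hypercube r).dist (step x 0) (step x r) := by
    have := ham_le_length q
    omega
  unfold IsGeodesic
  omega

def par (x : Fin r → Bool) : ZMod 2 := ∑ i, (cond (x i) 1 0)

lemma zmod2_cases : ∀ t : ZMod 2, t = 0 ∨ t = 1 := by decide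

lemma par_update (x : Fin r → Bool) (j : Fin r) :
    par (Function.update x j (!x j)) = par x + 1 := by
  unfold par
  rw [← Finset.add_sum_erase _ (fun i => cond (Function.update x j (!x j) i) (1 : ZMod 2) 0)
      (Finset.mem_univ j),
    ← Finset.add_sum_erase _ (fun i => cond (x i) (1 : ZMod 2) 0) (Finset.mem_univ j)]
  have hs : ∑ i ∈ Finset.univ.erase j, cond (Function.update x j (!x j) i) (1 : ZMod 2) 0
      = ∑ i ∈ Finset.univ.erase j, cond (x i) (1 : ZMod 2) 0 :=
    Finset.sum_congr rfl (fun i hi => by rw [Function.update_of_ne (Finset.mem_erase.1 hi).1])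
  rw [hs, Function.update_self]
  cases h : x j <;>
    simp only [h, cond_true, cond_false, Bool.not_true, Bool.not_false] <;>
    rcases zmod2_cases (∑ i ∈ Finset.univ.erase j, cond (x i) (1 : ZMod 2) 0) with hS | hS <;>
    rw [hS] <;> decide

lemma par_snoc {n : ℕ} (y : Fin n → Bool) (b : Bool) :
    par (Fin.snoc y b : Fin (n + 1) → Bool) = (∑ i, cond (y i) (1 : ZMod 2) 0) + cond b 1 0 := by
  unfold par
  rw [Fin.sum_univ_castSucc]
  simp

def embedEven {n : ℕ} (y : Fin n → Bool) : Fin (n + 1) → Bool :=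
  Fin.snoc y (if (∑ i, cond (y i) (1 : ZMod 2) 0) = 1 then true else false)

lemma par_embedEven {n : ℕ} (y : Fin n → Bool) : par (embedEven y) = 0 := by
  unfold embedEven
  rw [par_snoc]
  rcases zmod2_cases (∑ i, cond (y i) (1 : ZMod 2) 0) with h | h <;> rw [h] <;> decide

lemma embedEven_init {n : ℕ} (x : Fin (n + 1) → Bool) (hx : par x = 0) :
    embedEven (Fin.init x) = x := by
  have h := par_snoc (Fin.init x) (x (Fin.last n))
  rw [Fin.snoc_init_self, hx] at h
  have hb : (if (∑ i, cond (Fin.init x i) (1 : ZMod 2) 0) = 1 then true else false)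
      = x (Fin.last n) := by
    rcases zmod2_cases (∑ i, cond (Fin.init x i) (1 : ZMod 2) 0) with h0 | h0 <;>
      cases hbv : x (Fin.last n) <;>
      rw [h0, hbv] at h <;>
      first
        | exact absurd h (by decide)
        | (rw [h0]; decide)
  unfold embedEven
  rw [hb]
  exact Fin.snoc_init_self x

lemma step_start (a : Fin r → Bool) (j : Fin r) :
    step (fun i => if i.val < j.val then !(a i) else a i) j.val = a := by
  funext i
  by_cases h : i.val < j.val <;> simp [step, h]

lemma step_next {a b : Fin r → Bool} (j : Fin r) (hbj : b j = !(a j))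
    (hb : ∀ i, i ≠ j → a i = b i) :
    step (fun i => if i.val < j.val then !(a i) else a i) (j.val + 1) = b := by
  funext i
  rcases lt_trichotomy i.val j.val with h | h | h
  · have hab : a i = b i := hb i (fun he => by rw [he] at h; omega)
    simp [step, h, Nat.lt_succ_of_lt h, hab]
  · have hij : i = j := Fin.ext h
    subst hij
    simp [step, hbj]
  · have hab : a i = b i := hb i (fun he => by rw [he] at h; omega)
    have h1 : ¬ i.val < j.val := by omega
    have h2 : ¬ i.val < j.val + 1 := by omega
    simp [step, h1, h2, hab]

lemma swap_update {a b : Fin r → Bool} (j : Fin r) (hbj : b j = !(a j))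
    (hb : ∀ i, i ≠ j → a i = b i) :
    (fun i => if i.val < j.val then !(b i) else b i)
      = Function.update (fun i => if i.val < j.val then !(a i) else a i) j
          (!((fun i => if i.val < j.val then !(a i) else a i) j)) := by
  funext i
  rcases eq_or_ne i j with rfl | hne
  · simp [hbj]
  · rw [Function.update_of_ne hne]
    simp [hb i hne]

end HCaux

/-- If `r ≥ 2`, then the hypercube `Q_r` admits an isometric path edge cover consisting of
`2^(r-1)` geodesics; consequently `ip_e(Q_r) ≤ 2^(r-1)`. -/
theorem hypercube_ipe_cover (r : ℕ) (hr : 2 ≤ r) :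
    ∃ (u v : Fin (2 ^ (r - 1)) → (Fin r → Bool))
      (p : ∀ i, (hypercube r).Walk (u i) (v i)),
      IsIsometricPathEdgeCover (hypercube r) (2 ^ (r - 1)) u v p := by
  obtain ⟨n, rfl⟩ : ∃ n, r = n + 1 := ⟨r - 1, by omega⟩
  let E : (Fin n → Bool) ≃ Fin (2 ^ n) := Fintype.equivFinOfCardEq (by simp)
  refine ⟨fun i => HCaux.step (HCaux.embedEven (E.symm i)) 0,
          fun i => HCaux.step (HCaux.embedEven (E.symm i)) (n + 1),
          fun i => HCaux.seg (HCaux.embedEven (E.symm i)) 0,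
          fun i => HCaux.seg_geodesic _, ?_⟩
  intro e
  induction e using Sym2.ind with
  | _ a b =>
    intro he
    rw [SimpleGraph.mem_edgeSet] at he
    obtain ⟨j, hj, hu⟩ := he
    have hb : ∀ i, i ≠ j → a i = b i := fun i hi => by
      by_contra h; exact hi (hu i h)
    have hbj : b j = !(a j) := by
      cases hA : a j <;> cases hB : b j <;> rw [hA, hB] at hj <;> simp_all
    have haj : a j = !(b j) := by rw [hbj, Bool.not_not]
    have hb' : ∀ i, i ≠ j → b i = a i := fun i hi => (hb i hi).symm
    set x1 : Fin (n + 1) → Bool := fun i => if i.val < j.val then !(a i) else a i with hx1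
    set x2 : Fin (n + 1) → Bool := fun i => if i.val < j.val then !(b i) else b i with hx2
    have hpar : HCaux.par x2 = HCaux.par x1 + 1 := by
      rw [hx2, hx1, HCaux.swap_update j hbj hb]
      exact HCaux.par_update _ j
    rcases HCaux.zmod2_cases (HCaux.par x1) with h0 | h0
    · refine ⟨E (Fin.init x1), ?_⟩
      have hkey : HCaux.embedEven (E.symm (E (Fin.init x1))) = x1 := by
        rw [Equiv.symm_apply_apply]
        exact HCaux.embedEven_init x1 h0
      show s(a, b) ∈ (HCaux.seg (HCaux.embedEven (E.symm (E (Fin.init x1)))) 0).edges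
      rw [hkey]
      have := HCaux.seg_edges x1 0 j.val (Nat.zero_le _) j.isLt
      rwa [HCaux.step_start a j, HCaux.step_next j hbj hb] at this
    · have h2 : HCaux.par x2 = 0 := by rw [hpar, h0]; decide
      refine ⟨E (Fin.init x2), ?_⟩
      have hkey : HCaux.embedEven (E.symm (E (Fin.init x2))) = x2 := by
        rw [Equiv.symm_apply_apply]
        exact HCaux.embedEven_init x2 h2
      show s(a, b) ∈ (HCaux.seg (HCaux.embedEven (E.symm (E (Fin.init x2)))) 0).edges
      rw [hkey]
      have := HCaux.seg_edges x2 0 j.val (Nat.zero_le _) j.isLt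
      rw [HCaux.step_start b j, HCaux.step_next j haj hb'] at this
      rwa [Sym2.eq_swap]
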